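/- Let T be a real tree coded by a continuous excursion ζ : [0,1] → [0,∞) (ζ(0) = ζ(1) = 0), with projection p_ζ and root ρ = p_ζ(0), and let Γ : T → ℝ be continuous with Γ(ρ) = 0. Define D°(a, b) = Γ(a) + Γ(b) − 2 max{ min{Γ̂(r) : r ∈ [s∧s', s∨s']} : s, s' ∈ [0,1], p_ζ(s) = a, p_ζ(s') = b }, where Γ̂ = Γ ∘ p_ζ, and D(a,b) = inf{ Σ_{i=1}^p D°(a_{i−1}, a_i) : p ≥ 1, a₀ = a, a_p = b }. Then D is a pseudo-metric on T, D ≤ D°, and for all a, b ∈ T: D(a, b) ≥ Γ(a) + Γ(b) − 2 inf{Γ(c) : c ∈ [a, b]}, where [a, b] is the arc joining a and b in T. -/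

import Mathlib

open Set

namespace BMaux

noncomputable def m (ζ : ℝ → ℝ) (a b : ℝ) : ℝ := sInf (ζ '' Icc (min a b) (max a b))

lemma m_comm (ζ : ℝ → ℝ) (a b : ℝ) : m ζ a b = m ζ b a := by
  simp [m, min_comm, max_comm]

lemma m_self (ζ : ℝ → ℝ) (a : ℝ) : m ζ a a = ζ a := by
  simp [m]

lemma Icc_sub {a b : ℝ} (ha : a ∈ Icc (0:ℝ) 1) (hb : b ∈ Icc (0:ℝ) 1) :
    Icc (min a b) (max a b) ⊆ Icc (0:ℝ) 1 :=
  Icc_subset_Icc (le_min ha.1 hb.1) (max_le ha.2 hb.2)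

variable {ζ : ℝ → ℝ}

lemma m_bdd (hζc : ContinuousOn ζ (Icc 0 1)) {a b : ℝ}
    (ha : a ∈ Icc (0:ℝ) 1) (hb : b ∈ Icc (0:ℝ) 1) :
    BddBelow (ζ '' Icc (min a b) (max a b)) :=
  ((isCompact_Icc).image_of_continuousOn (hζc.mono (Icc_sub ha hb))).bddBelow

lemma m_le (hζc : ContinuousOn ζ (Icc 0 1)) {a b x : ℝ}
    (ha : a ∈ Icc (0:ℝ) 1) (hb : b ∈ Icc (0:ℝ) 1)
    (hx : x ∈ Icc (min a b) (max a b)) : m ζ a b ≤ ζ x :=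
  csInf_le (m_bdd hζc ha hb) ⟨x, hx, rfl⟩

lemma le_m {a b c : ℝ} (h : ∀ x ∈ Icc (min a b) (max a b), c ≤ ζ x) : c ≤ m ζ a b :=
  le_csInf ((nonempty_Icc.2 min_le_max).image ζ) (by rintro _ ⟨x, hx, rfl⟩; exact h x hx)

lemma m_mem (hζc : ContinuousOn ζ (Icc 0 1)) {a b : ℝ}
    (ha : a ∈ Icc (0:ℝ) 1) (hb : b ∈ Icc (0:ℝ) 1) :
    ∃ x ∈ Icc (min a b) (max a b), ζ x = m ζ a b := by
  have hc : IsCompact (ζ '' Icc (min a b) (max a b)) :=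
    (isCompact_Icc).image_of_continuousOn (hζc.mono (Icc_sub ha hb))
  have hne : (ζ '' Icc (min a b) (max a b)).Nonempty :=
    ((nonempty_Icc.2 min_le_max).image ζ)
  obtain ⟨x, hx, hfx⟩ := hc.sInf_mem hne
  exact ⟨x, hx, hfx⟩

lemma m_mono (hζc : ContinuousOn ζ (Icc 0 1)) {a b a' b' : ℝ}
    (ha : a ∈ Icc (0:ℝ) 1) (hb : b ∈ Icc (0:ℝ) 1)
    (hsub : Icc (min a' b') (max a' b') ⊆ Icc (min a b) (max a b)) :
    m ζ a b ≤ m ζ a' b' :=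
  le_m (fun x hx => m_le hζc ha hb (hsub hx))

lemma m_split (hζc : ContinuousOn ζ (Icc 0 1)) {a b c : ℝ}
    (ha : a ∈ Icc (0:ℝ) 1) (hb : b ∈ Icc (0:ℝ) 1)
    (hc : c ∈ Icc (0:ℝ) 1) (hab : a ≤ b) (hbc : b ≤ c) :
    m ζ a c = min (m ζ a b) (m ζ b c) := by
  have hac : a ≤ c := hab.trans hbc
  have h1 : Icc a c = Icc a b ∪ Icc b c := (Icc_union_Icc_eq_Icc hab hbc).symm
  have hbdd1 : BddBelow (ζ '' Icc a b) := by
    have := m_bdd hζc (ζ := ζ) ha hb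
    rwa [min_eq_left hab, max_eq_right hab] at this
  have hbdd2 : BddBelow (ζ '' Icc b c) := by
    have := m_bdd hζc (ζ := ζ) hb hc
    rwa [min_eq_left hbc, max_eq_right hbc] at this
  have h2 : m ζ a c = sInf (ζ '' Icc a b ∪ ζ '' Icc b c) := by
    rw [m, min_eq_left hac, max_eq_right hac, h1, image_union]
  rw [h2, csInf_union hbdd1 ((nonempty_Icc.2 hab).image ζ) hbdd2
    ((nonempty_Icc.2 hbc).image ζ), m, min_eq_left hab, max_eq_right hab,
    m, min_eq_left hbc, max_eq_right hbc]

lemma m_min_le (hζc : ContinuousOn ζ (Icc 0 1)) {a b c : ℝ}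
    (ha : a ∈ Icc (0:ℝ) 1) (hb : b ∈ Icc (0:ℝ) 1) (hc : c ∈ Icc (0:ℝ) 1) :
    min (m ζ a b) (m ζ b c) ≤ m ζ a c := by
  refine le_m (fun x hx => ?_)
  rcases hx with ⟨hx1, hx2⟩
  rcases le_total x b with hxb | hbx
  · by_cases h : min a b ≤ x
    · exact le_trans (min_le_left _ _)
        (m_le hζc ha hb ⟨h, hxb.trans (le_max_right _ _)⟩)
    · push_neg at h
      have hxa : x < a := lt_of_lt_of_le h (min_le_left _ _)
      have hcx : c ≤ x := by
        rcases min_le_iff.1 hx1 with h' | h'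
        · exact absurd h' (not_le.2 hxa)
        · exact h'
      exact le_trans (min_le_right _ _)
        (m_le hζc hb hc ⟨le_trans (min_le_right _ _) hcx, hxb.trans (le_max_left _ _)⟩)
  · by_cases h : x ≤ max a b
    · exact le_trans (min_le_left _ _)
        (m_le hζc ha hb ⟨le_trans (min_le_right _ _) hbx, h⟩)
    · push_neg at h
      have hax : a < x := lt_of_le_of_lt (le_max_left _ _) h
      have hxc : x ≤ c := by
        rcases le_max_iff.1 hx2 with h' | h'
        · exact absurd h' (not_le.2 hax)
        · exact h'
      exact le_trans (min_le_right _ _)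
        (m_le hζc hb hc ⟨le_trans (min_le_left _ _) hbx, hxc.trans (le_max_right _ _)⟩)

end BMaux

namespace BMaux2
open BMaux

variable {ζ : ℝ → ℝ} {dζ : ℝ → ℝ → ℝ}

lemma d_comm (hdm : ∀ s s', dζ s s' = ζ s + ζ s' - 2 * m ζ s s') (s s' : ℝ) :
    dζ s s' = dζ s' s := by rw [hdm, hdm, m_comm]; ring

lemma d_self (hdm : ∀ s s', dζ s s' = ζ s + ζ s' - 2 * m ζ s s') (s : ℝ) :
    dζ s s = 0 := by rw [hdm, m_self]; ring

lemma mem_endL {a b : ℝ} : a ∈ Icc (min a b) (max a b) := ⟨min_le_left _ _, le_max_left _ _⟩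
lemma mem_endR {a b : ℝ} : b ∈ Icc (min a b) (max a b) := ⟨min_le_right _ _, le_max_right _ _⟩

lemma d_nonneg (hζc : ContinuousOn ζ (Icc 0 1))
    (hdm : ∀ s s', dζ s s' = ζ s + ζ s' - 2 * m ζ s s')
    {s s' : ℝ} (hs : s ∈ Icc (0:ℝ) 1) (hs' : s' ∈ Icc (0:ℝ) 1) : 0 ≤ dζ s s' := by
  have h1 := m_le hζc hs hs' (mem_endL (a := s) (b := s'))
  have h2 := m_le hζc hs hs' (mem_endR (a := s) (b := s'))
  rw [hdm]; linarith

lemma d_tri (hζc : ContinuousOn ζ (Icc 0 1))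
    (hdm : ∀ s s', dζ s s' = ζ s + ζ s' - 2 * m ζ s s')
    {s s' s'' : ℝ} (hs : s ∈ Icc (0:ℝ) 1) (hs' : s' ∈ Icc (0:ℝ) 1)
    (hs'' : s'' ∈ Icc (0:ℝ) 1) : dζ s s'' ≤ dζ s s' + dζ s' s'' := by
  have hmin := m_min_le hζc hs hs' hs''
  have h1 := m_le hζc hs hs' (mem_endR (a := s) (b := s'))
  have h2 := m_le hζc hs' hs'' (mem_endL (a := s') (b := s''))
  rw [hdm, hdm, hdm]
  rcases le_total (m ζ s s') (m ζ s' s'') with h | h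
  · rw [min_eq_left h] at hmin; linarith
  · rw [min_eq_right h] at hmin; linarith

lemma d_congr (hζc : ContinuousOn ζ (Icc 0 1))
    (hdm : ∀ s s', dζ s s' = ζ s + ζ s' - 2 * m ζ s s')
    {t s : ℝ} (ht : t ∈ Icc (0:ℝ) 1) (hs : s ∈ Icc (0:ℝ) 1)
    (h0 : dζ t s = 0) {r : ℝ} (hr : r ∈ Icc (0:ℝ) 1) : dζ t r = dζ s r := by
  have h1 := d_tri hζc hdm ht hs hr
  have h2 := d_tri hζc hdm hs ht hr
  rw [d_comm hdm s t] at h2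
  rw [h0] at h1 h2
  linarith

/-- Representative of an arc point in the coding interval, ordered case. -/
lemma repr_exists (hζc : ContinuousOn ζ (Icc 0 1))
    (hdm : ∀ s s', dζ s s' = ζ s + ζ s' - 2 * m ζ s s')
    {t t' r : ℝ} (ht : t ∈ Icc (0:ℝ) 1) (ht' : t' ∈ Icc (0:ℝ) 1)
    (hr : r ∈ Icc (0:ℝ) 1) (htt' : t ≤ t')
    (harc : dζ t r + dζ r t' = dζ t t') : ∃ u ∈ Icc t t', dζ u r = 0 := by
  have key : m ζ t r + m ζ t' r = ζ r + m ζ t t' := by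
    rw [hdm, hdm, hdm] at harc
    have := m_comm ζ r t'
    linarith
  rcases le_total t r with htr | hrt
  · rcases le_total r t' with hrt' | ht'r
    · exact ⟨r, ⟨htr, hrt'⟩, d_self hdm r⟩
    · -- t ≤ t' ≤ r
      have hsp : m ζ t r = min (m ζ t t') (m ζ t' r) := m_split hζc ht ht' hr htt' ht'r
      have hc1 : m ζ t' r ≤ ζ r := m_le hζc ht' hr (mem_endR (a := t') (b := r))
      have forced : m ζ t' r = ζ r ∧ m ζ t t' ≤ ζ r := by
        rcases le_total (m ζ t t') (m ζ t' r) with h | h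
        · rw [hsp, min_eq_left h] at key; constructor <;> linarith
        · rw [hsp, min_eq_right h] at key; constructor <;> linarith
      have hζt' : ζ r ≤ ζ t' := by
        have := m_le hζc ht' hr (mem_endL (a := t') (b := r))
        linarith [forced.1]
      -- u = sSup of S
      set S : Set ℝ := Icc t t' ∩ ζ ⁻¹' (Iic (ζ r)) with hS
      have hIccsub : Icc t t' ⊆ Icc (0:ℝ) 1 := Icc_subset_Icc ht.1 ht'.2
      have hcon : ContinuousOn ζ (Icc t t') := hζc.mono hIccsub
      have hclosed : IsClosed S := hcon.preimage_isClosed_of_isClosed isClosed_Icc isClosed_Iic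
      have hScomp : IsCompact S := isCompact_Icc.of_isClosed_subset hclosed inter_subset_left
      have hSne : S.Nonempty := by
        obtain ⟨x₀, hx₀, hvx₀⟩ := m_mem hζc ht ht'
        rw [min_eq_left htt', max_eq_right htt'] at hx₀
        exact ⟨x₀, hx₀, by simp only [mem_preimage, mem_Iic, hvx₀]; linarith [forced.2]⟩
      set u : ℝ := sSup S with hu
      have huS : u ∈ S := hScomp.sSup_mem hSne
      have hub : ∀ x ∈ S, x ≤ u := fun x hx => le_csSup hScomp.bddAbove hx
      have hu1 : u ∈ Icc t t' := huS.1
      have hu01 : u ∈ Icc (0:ℝ) 1 := hIccsub hu1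
      have hu2 : ζ u ≤ ζ r := huS.2
      -- IVT on [u, t']
      have hcon2 : ContinuousOn ζ (Icc u t') := hζc.mono (Icc_subset_Icc hu01.1 ht'.2)
      obtain ⟨v, hv, hζv⟩ := intermediate_value_Icc hu1.2 hcon2 (⟨hu2, hζt'⟩ : ζ r ∈ Icc (ζ u) (ζ t'))
      have hvS : v ∈ S := ⟨⟨hu1.1.trans hv.1, hv.2⟩, by simp [mem_preimage, hζv]⟩
      have hvu : v = u := le_antisymm (hub v hvS) hv.1
      have hζu : ζ u = ζ r := by rw [← hvu, hζv]
      have hclaim : ∀ x ∈ Icc u t', ζ r ≤ ζ x := by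
        intro x hx
        by_contra hcon'
        push_neg at hcon'
        have hxS : x ∈ S := ⟨⟨hu1.1.trans hx.1, hx.2⟩, le_of_lt hcon'⟩
        have := hub x hxS
        have hxu : x = u := le_antisymm this hx.1
        rw [hxu, hζu] at hcon'
        exact absurd hcon' (lt_irrefl _)
      -- compute m ζ u r
      have hsp2 : m ζ u r = min (m ζ u t') (m ζ t' r) := m_split hζc hu01 ht' hr hu1.2 ht'r
      have hge : ζ r ≤ m ζ u t' := by
        refine le_m (fun x hx => ?_)
        rw [min_eq_left hu1.2, max_eq_right hu1.2] at hx
        exact hclaim x hx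
      have hmur : m ζ u r = ζ r := by
        rw [hsp2, forced.1, min_eq_right hge]
      refine ⟨u, hu1, ?_⟩
      rw [hdm, hmur, hζu]; ring
  · -- r ≤ t ≤ t'
    have hsp : m ζ r t' = min (m ζ r t) (m ζ t t') := m_split hζc hr ht ht' hrt htt'
    have hc1 : m ζ r t ≤ ζ r := m_le hζc hr ht (mem_endL (a := r) (b := t))
    have key' : m ζ r t + min (m ζ r t) (m ζ t t') = ζ r + m ζ t t' := by
      have h1 := m_comm ζ t r
      have h2 := m_comm ζ t' r
      rw [← hsp]
      have h3 := m_comm ζ r t'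
      linarith
    have forced : m ζ r t = ζ r ∧ m ζ t t' ≤ ζ r := by
      rcases le_total (m ζ r t) (m ζ t t') with h | h
      · rw [min_eq_left h] at key'; constructor <;> linarith
      · rw [min_eq_right h] at key'; constructor <;> linarith
    have hζt : ζ r ≤ ζ t := by
      have := m_le hζc hr ht (mem_endR (a := r) (b := t))
      linarith [forced.1]
    set S : Set ℝ := Icc t t' ∩ ζ ⁻¹' (Iic (ζ r)) with hS
    have hIccsub : Icc t t' ⊆ Icc (0:ℝ) 1 := Icc_subset_Icc ht.1 ht'.2
    have hcon : ContinuousOn ζ (Icc t t') := hζc.mono hIccsub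
    have hclosed : IsClosed S := hcon.preimage_isClosed_of_isClosed isClosed_Icc isClosed_Iic
    have hScomp : IsCompact S := isCompact_Icc.of_isClosed_subset hclosed inter_subset_left
    have hSne : S.Nonempty := by
      obtain ⟨x₀, hx₀, hvx₀⟩ := m_mem hζc ht ht'
      rw [min_eq_left htt', max_eq_right htt'] at hx₀
      exact ⟨x₀, hx₀, by simp only [mem_preimage, mem_Iic, hvx₀]; linarith [forced.2]⟩
    set u : ℝ := sInf S with hu
    have huS : u ∈ S := hScomp.sInf_mem hSne
    have hlb : ∀ x ∈ S, u ≤ x := fun x hx => csInf_le hScomp.bddBelow hx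
    have hu1 : u ∈ Icc t t' := huS.1
    have hu01 : u ∈ Icc (0:ℝ) 1 := hIccsub hu1
    have hu2 : ζ u ≤ ζ r := huS.2
    have hcon2 : ContinuousOn ζ (Icc t u) := hζc.mono (Icc_subset_Icc ht.1 hu01.2)
    obtain ⟨v, hv, hζv⟩ := intermediate_value_Icc' hu1.1 hcon2 (⟨hu2, hζt⟩ : ζ r ∈ Icc (ζ u) (ζ t))
    have hvS : v ∈ S := ⟨⟨hv.1, hv.2.trans hu1.2⟩, by simp [mem_preimage, hζv]⟩
    have hvu : v = u := le_antisymm hv.2 (hlb v hvS)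
    have hζu : ζ u = ζ r := by rw [← hvu, hζv]
    have hclaim : ∀ x ∈ Icc t u, ζ r ≤ ζ x := by
      intro x hx
      by_contra hcon'
      push_neg at hcon'
      have hxS : x ∈ S := ⟨⟨hx.1, hx.2.trans hu1.2⟩, le_of_lt hcon'⟩
      have hxu : x = u := le_antisymm hx.2 (hlb x hxS)
      rw [hxu, hζu] at hcon'
      exact absurd hcon' (lt_irrefl _)
    have hsp2 : m ζ r u = min (m ζ r t) (m ζ t u) := m_split hζc hr ht hu01 hrt hu1.1
    have hge : ζ r ≤ m ζ t u := by
      refine le_m (fun x hx => ?_)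
      rw [min_eq_left hu1.1, max_eq_right hu1.1] at hx
      exact hclaim x hx
    have hmur : m ζ r u = ζ r := by
      rw [hsp2, forced.1, min_eq_left hge]
    refine ⟨u, hu1, ?_⟩
    rw [hdm, m_comm, hmur, hζu]; ring

/-- Representative of an arc point, general version. -/
lemma repr_exists' (hζc : ContinuousOn ζ (Icc 0 1))
    (hdm : ∀ s s', dζ s s' = ζ s + ζ s' - 2 * m ζ s s')
    {t t' r : ℝ} (ht : t ∈ Icc (0:ℝ) 1) (ht' : t' ∈ Icc (0:ℝ) 1)
    (hr : r ∈ Icc (0:ℝ) 1)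
    (harc : dζ t r + dζ r t' = dζ t t') :
    ∃ u ∈ Icc (min t t') (max t t'), dζ u r = 0 := by
  rcases le_total t t' with h | h
  · rw [min_eq_left h, max_eq_right h]
    exact repr_exists hζc hdm ht ht' hr h harc
  · rw [min_eq_right h, max_eq_left h]
    refine repr_exists hζc hdm ht' ht hr h ?_
    have h1 := d_comm hdm t r
    have h2 := d_comm hdm r t'
    have h3 := d_comm hdm t t'
    linarith

/-- A time `u` between `s` and `s''` lying on the arc from `s` to `s''` lies on the
arc from `s` to `b` or from `b` to `s''`, for any `b`. Ordered case `s ≤ s''`. -/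
lemma arc_split (hζc : ContinuousOn ζ (Icc 0 1))
    {s s'' b u : ℝ} (hs : s ∈ Icc (0:ℝ) 1) (hs'' : s'' ∈ Icc (0:ℝ) 1)
    (hb : b ∈ Icc (0:ℝ) 1) (hu : u ∈ Icc s s'')
    (heq : m ζ s u + m ζ u s'' = ζ u + m ζ s s'') :
    m ζ s u + m ζ u b = ζ u + m ζ s b ∨ m ζ b u + m ζ u s'' = ζ u + m ζ b s'' := by
  have hu01 : u ∈ Icc (0:ℝ) 1 := ⟨hs.1.trans hu.1, hu.2.trans hs''.2⟩
  have hsplit : m ζ s s'' = min (m ζ s u) (m ζ u s'') := m_split hζc hs hu01 hs'' hu.1 hu.2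
  have hmax : max (m ζ s u) (m ζ u s'') = ζ u := by
    have := min_add_max (m ζ s u) (m ζ u s'')
    rw [hsplit] at heq; linarith
  rcases le_total b u with hbu | hub
  · -- b ≤ u
    have hbs'' : m ζ b s'' = min (m ζ b u) (m ζ u s'') := m_split hζc hb hu01 hs'' hbu hu.2
    have hble : m ζ b u ≤ ζ u := m_le hζc hb hu01 (mem_endR (a := b) (b := u))
    rcases le_total (m ζ s u) (m ζ u s'') with hM | hM
    · -- ζ u = m ζ u s''
      right
      have hM2 : m ζ u s'' = ζ u := by rw [max_eq_right hM] at hmax; exact hmax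
      rw [hbs'', hM2, min_eq_left hble]
      ring
    · -- ζ u = m ζ s u
      have hM1 : m ζ s u = ζ u := by rw [max_eq_left hM] at hmax; exact hmax
      rcases le_total s b with hsb | hbs
      · right
        have hsub : Icc (min b u) (max b u) ⊆ Icc (min s u) (max s u) := by
          rw [min_eq_left hbu, max_eq_right hbu, min_eq_left hu.1, max_eq_right hu.1]
          exact Icc_subset_Icc hsb le_rfl
        have hbu' : m ζ b u = ζ u :=
          le_antisymm hble (by rw [← hM1]; exact m_mono hζc hs hu01 hsub)
        rw [hbs'', hbu', min_eq_right (hM.trans hM1.le)]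
      · -- b ≤ s
        have hsplit2 : m ζ b u = min (m ζ b s) (m ζ s u) := m_split hζc hb hs hu01 hbs hu.1
        rcases le_total (m ζ s u) (m ζ b s) with hc | hc
        · right
          have hbu' : m ζ b u = ζ u := by rw [hsplit2, min_eq_right hc, hM1]
          rw [hbs'', hbu', min_eq_right (hM.trans hM1.le)]
        · left
          have hbu' : m ζ u b = m ζ b s := by
            rw [m_comm, hsplit2, min_eq_left hc]
          rw [hbu', hM1, m_comm ζ s b]
  · -- u ≤ b
    have hsb : m ζ s b = min (m ζ s u) (m ζ u b) := m_split hζc hs hu01 hb hu.1 hub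
    have hule : m ζ u b ≤ ζ u := m_le hζc hu01 hb (mem_endL (a := u) (b := b))
    rcases le_total (m ζ u s'') (m ζ s u) with hM | hM
    · -- ζ u = m ζ s u
      left
      have hM1 : m ζ s u = ζ u := by rw [max_eq_left hM] at hmax; exact hmax
      rw [hsb, hM1, min_eq_right hule]
    · -- ζ u = m ζ u s''
      have hM2 : m ζ u s'' = ζ u := by rw [max_eq_right hM] at hmax; exact hmax
      rcases le_total b s'' with hbs'' | hs''b
      · left
        have hsub : Icc (min u b) (max u b) ⊆ Icc (min u s'') (max u s'') := by
          rw [min_eq_left hub, max_eq_right hub, min_eq_left hu.2, max_eq_right hu.2]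
          exact Icc_subset_Icc le_rfl hbs''
        have hub' : m ζ u b = ζ u :=
          le_antisymm hule (by rw [← hM2]; exact m_mono hζc hu01 hs'' hsub)
        rw [hsb, hub', min_eq_left (hM.trans hM2.le)]
        ring
      · -- s'' ≤ b
        have hsplit2 : m ζ u b = min (m ζ u s'') (m ζ s'' b) :=
          m_split hζc hu01 hs'' hb hu.2 hs''b
        rcases le_total (m ζ u s'') (m ζ s'' b) with hc | hc
        · left
          have hub' : m ζ u b = ζ u := by rw [hsplit2, min_eq_left hc, hM2]
          rw [hsb, hub', min_eq_left (hM.trans hM2.le)]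
          ring
        · right
          have hub' : m ζ b u = m ζ s'' b := by
            rw [m_comm ζ b u, hsplit2, min_eq_right hc]
          rw [hub', hM2, m_comm ζ b s'']
          ring

end BMaux2


open BMaux BMaux2

/-- Brownian-map-type pseudo-metric built from a tree coded by an excursion `ζ` on
`[0,1]` and a label function `Γ` (given on `[0,1]` through `G = Γ ∘ p_ζ`, constant on
the equivalence classes of the tree): `D` is a pseudo-metric, `D ≤ D°`, and the cactus
lower bound `D(a,b) ≥ Γ(a) + Γ(b) − 2 inf_{[a,b]} Γ` holds, where the arc `[a,b]` in the
coded tree is the set of points `r` lying on the `d_ζ`-geodesic from `a` to `b`. -/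
theorem brownian_map_pseudometric_cactus_bound
    (ζ G : ℝ → ℝ)
    (hζc : ContinuousOn ζ (Icc 0 1)) (hζnn : ∀ s ∈ Icc (0 : ℝ) 1, 0 ≤ ζ s)
    (hζ0 : ζ 0 = 0) (hζ1 : ζ 1 = 0)
    (hGc : ContinuousOn G (Icc 0 1)) (hG0 : G 0 = 0)
    (dζ : ℝ → ℝ → ℝ)
    (hdζ : ∀ s s', dζ s s' = ζ s + ζ s' - 2 * sInf (ζ '' Icc (min s s') (max s s')))
    (hGcompat : ∀ s ∈ Icc (0 : ℝ) 1, ∀ s' ∈ Icc (0 : ℝ) 1, dζ s s' = 0 → G s = G s')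
    (D₀ : ℝ → ℝ → ℝ)
    (hD₀ : ∀ s s', D₀ s s' = G s + G s' - 2 * sSup {m : ℝ |
      ∃ t ∈ Icc (0 : ℝ) 1, ∃ t' ∈ Icc (0 : ℝ) 1, dζ t s = 0 ∧ dζ t' s' = 0 ∧
        m = sInf (G '' Icc (min t t') (max t t'))})
    (D : ℝ → ℝ → ℝ)
    (hD : ∀ s s', D s s' = sInf {x : ℝ | ∃ n : ℕ, 0 < n ∧ ∃ a : ℕ → ℝ,
      (∀ i ≤ n, a i ∈ Icc (0 : ℝ) 1) ∧ a 0 = s ∧ a n = s' ∧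
      x = ∑ i ∈ Finset.range n, D₀ (a i) (a (i + 1))})
    (Arc : ℝ → ℝ → Set ℝ)
    (hArc : ∀ s s', Arc s s' = {r ∈ Icc (0 : ℝ) 1 | dζ s r + dζ r s' = dζ s s'}) :
    ∀ s ∈ Icc (0 : ℝ) 1, ∀ s' ∈ Icc (0 : ℝ) 1, ∀ s'' ∈ Icc (0 : ℝ) 1,
      0 ≤ D s s' ∧ D s s = 0 ∧ D s s' = D s' s ∧
      D s s'' ≤ D s s' + D s' s'' ∧
      D s s' ≤ D₀ s s' ∧
      G s + G s' - 2 * sInf (G '' Arc s s') ≤ D s s' := by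
  have hdm : ∀ s s', dζ s s' = ζ s + ζ s' - 2 * m ζ s s' := hdζ
  -- the set of interval minima over representatives
  set Mset : ℝ → ℝ → Set ℝ := fun s s' => {x : ℝ |
      ∃ t ∈ Icc (0 : ℝ) 1, ∃ t' ∈ Icc (0 : ℝ) 1, dζ t s = 0 ∧ dζ t' s' = 0 ∧
        x = sInf (G '' Icc (min t t') (max t t'))} with hMset
  have hD₀' : ∀ s s', D₀ s s' = G s + G s' - 2 * sSup (Mset s s') := hD₀
  set Sset : ℝ → ℝ → Set ℝ := fun s s' => {x : ℝ | ∃ n : ℕ, 0 < n ∧ ∃ a : ℕ → ℝ,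
      (∀ i ≤ n, a i ∈ Icc (0 : ℝ) 1) ∧ a 0 = s ∧ a n = s' ∧
      x = ∑ i ∈ Finset.range n, D₀ (a i) (a (i + 1))} with hSset
  have hDS : ∀ s s', D s s' = sInf (Sset s s') := hD
  -- global lower bound for G on [0,1]
  obtain ⟨K, hK⟩ := (isCompact_Icc.image_of_continuousOn hGc).bddBelow
  have hK' : ∀ x ∈ Icc (0:ℝ) 1, K ≤ G x := fun x hx => hK (mem_image_of_mem G hx)
  -- basic facts about Mset
  have hMne : ∀ s ∈ Icc (0:ℝ) 1, ∀ s' ∈ Icc (0:ℝ) 1, (Mset s s').Nonempty := by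
    intro s hs s' hs'
    exact ⟨m G s s', s, hs, s', hs', d_self hdm s, d_self hdm s', rfl⟩
  have hMub : ∀ s ∈ Icc (0:ℝ) 1, ∀ s' ∈ Icc (0:ℝ) 1, ∀ x ∈ Mset s s',
      x ≤ G s ∧ x ≤ G s' := by
    rintro s hs s' hs' x ⟨t, ht, t', ht', h1, h2, rfl⟩
    have hGt : G t = G s := hGcompat t ht s hs h1
    have hGt' : G t' = G s' := hGcompat t' ht' s' hs' h2
    constructor
    · rw [← hGt]; exact m_le hGc ht ht' (mem_endL (a := t) (b := t'))
    · rw [← hGt']; exact m_le hGc ht ht' (mem_endR (a := t) (b := t'))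
  have hMbddAbove : ∀ s ∈ Icc (0:ℝ) 1, ∀ s' ∈ Icc (0:ℝ) 1, BddAbove (Mset s s') :=
    fun s hs s' hs' => ⟨G s, fun x hx => (hMub s hs s' hs' x hx).1⟩
  have hD₀nn : ∀ s ∈ Icc (0:ℝ) 1, ∀ s' ∈ Icc (0:ℝ) 1, 0 ≤ D₀ s s' := by
    intro s hs s' hs'
    have h : sSup (Mset s s') ≤ (G s + G s') / 2 := by
      refine csSup_le (hMne s hs s' hs') (fun x hx => ?_)
      have := hMub s hs s' hs' x hx
      linarith [this.1, this.2]
    rw [hD₀']; linarith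
  have hD₀comm : ∀ s s', D₀ s s' = D₀ s' s := by
    intro s s'
    have hset : Mset s s' = Mset s' s := by
      ext x
      constructor
      · rintro ⟨t, ht, t', ht', h1, h2, rfl⟩
        exact ⟨t', ht', t, ht, h2, h1, by rw [min_comm, max_comm]⟩
      · rintro ⟨t, ht, t', ht', h1, h2, rfl⟩
        exact ⟨t', ht', t, ht, h2, h1, by rw [min_comm, max_comm]⟩
    rw [hD₀', hD₀', hset]; ring
  have hD₀self : ∀ s ∈ Icc (0:ℝ) 1, D₀ s s = 0 := by
    intro s hs
    have h1 : sSup (Mset s s) = G s := by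
      refine le_antisymm (csSup_le (hMne s hs s hs) (fun x hx => (hMub s hs s hs x hx).1)) ?_
      have hmem : (m G s s : ℝ) ∈ Mset s s :=
        ⟨s, hs, s, hs, d_self hdm s, d_self hdm s, rfl⟩
      have := le_csSup (hMbddAbove s hs s hs) hmem
      rwa [m_self] at this
    rw [hD₀', h1]; ring
  -- Arc facts
  have hArc01 : ∀ s s', Arc s s' ⊆ Icc (0:ℝ) 1 := by
    intro s s'; rw [hArc]; exact fun r hr => hr.1
  have hmemArc : ∀ s ∈ Icc (0:ℝ) 1, ∀ s' ∈ Icc (0:ℝ) 1,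
      s ∈ Arc s s' ∧ s' ∈ Arc s s' := by
    intro s hs s' hs'
    rw [hArc]
    exact ⟨⟨hs, by rw [d_self hdm s]; ring⟩, ⟨hs', by rw [d_self hdm s']; ring⟩⟩
  have hArcbdd : ∀ s s', BddBelow (G '' Arc s s') := by
    intro s s'
    refine ⟨K, ?_⟩
    rintro - ⟨r, hr, rfl⟩
    exact hK' r (hArc01 s s' hr)
  have hArcne : ∀ s ∈ Icc (0:ℝ) 1, ∀ s' ∈ Icc (0:ℝ) 1, (G '' Arc s s').Nonempty :=
    fun s hs s' hs' => ⟨G s, mem_image_of_mem G (hmemArc s hs s' hs').1⟩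
  have hInfArc_le : ∀ s s' r, r ∈ Arc s s' → sInf (G '' Arc s s') ≤ G r :=
    fun s s' r hr => csInf_le (hArcbdd s s') (mem_image_of_mem G hr)
  -- key: every element of Mset is ≤ inf of G over the arc
  have hkey : ∀ s ∈ Icc (0:ℝ) 1, ∀ s' ∈ Icc (0:ℝ) 1, ∀ x ∈ Mset s s',
      x ≤ sInf (G '' Arc s s') := by
    rintro s hs s' hs' x ⟨t, ht, t', ht', h1, h2, rfl⟩
    refine le_csInf (hArcne s hs s' hs') ?_
    rintro - ⟨r, hr, rfl⟩
    rw [hArc] at hr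
    obtain ⟨hr01, hreq⟩ := hr
    have e1 : dζ t r = dζ s r := d_congr hζc hdm ht hs h1 hr01
    have e2 : dζ r t' = dζ r s' := by
      rw [d_comm hdm r t', d_comm hdm r s']
      exact d_congr hζc hdm ht' hs' h2 hr01
    have e3 : dζ t t' = dζ s s' := by
      rw [d_congr hζc hdm ht hs h1 ht', d_comm hdm s t',
        d_congr hζc hdm ht' hs' h2 hs, d_comm hdm s' s]
    have harc' : dζ t r + dζ r t' = dζ t t' := by rw [e1, e2, e3]; exact hreq
    obtain ⟨u, hu, hur⟩ := repr_exists' hζc hdm ht ht' hr01 harc'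
    have hu01 : u ∈ Icc (0:ℝ) 1 := Icc_sub ht ht' hu
    have hGu : G u = G r := hGcompat u hu01 r hr01 hur
    calc sInf (G '' Icc (min t t') (max t t')) ≤ G u := m_le hGc ht ht' hu
    _ = G r := hGu
  have hΦD₀ : ∀ s ∈ Icc (0:ℝ) 1, ∀ s' ∈ Icc (0:ℝ) 1,
      G s + G s' - 2 * sInf (G '' Arc s s') ≤ D₀ s s' := by
    intro s hs s' hs'
    have h : sSup (Mset s s') ≤ sInf (G '' Arc s s') :=
      csSup_le (hMne s hs s' hs') (hkey s hs s' hs')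
    rw [hD₀']; linarith
  -- m/dζ conversion
  have hmd : ∀ a b c : ℝ, (m ζ a c + m ζ c b = ζ c + m ζ a b) ↔
      (dζ a c + dζ c b = dζ a b) := by
    intro a b c
    rw [hdm, hdm, hdm]
    constructor <;> intro h <;> linarith
  -- arc splitting
  have hArcsub : ∀ s ∈ Icc (0:ℝ) 1, ∀ s' ∈ Icc (0:ℝ) 1, ∀ s'' ∈ Icc (0:ℝ) 1,
      Arc s s'' ⊆ Arc s s' ∪ Arc s' s'' := by
    intro s hs s' hs' s'' hs'' r hr
    rw [hArc] at hr
    obtain ⟨hr01, hreq⟩ := hr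
    obtain ⟨u, hu, hur⟩ := repr_exists' hζc hdm hs hs'' hr01 hreq
    have hu01 : u ∈ Icc (0:ℝ) 1 := Icc_sub hs hs'' hu
    have hcg : ∀ x ∈ Icc (0:ℝ) 1, dζ u x = dζ r x :=
      fun x hx => d_congr hζc hdm hu01 hr01 hur hx
    have hequ : dζ s u + dζ u s'' = dζ s s'' := by
      rw [d_comm hdm s u, hcg s hs, d_comm hdm r s, hcg s'' hs'']
      exact hreq
    have hmu : m ζ s u + m ζ u s'' = ζ u + m ζ s s'' := (hmd s s'' u).2 hequ
    have htrans : ∀ a b : ℝ, a ∈ Icc (0:ℝ) 1 → b ∈ Icc (0:ℝ) 1 →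
        dζ a u + dζ u b = dζ a b → r ∈ Arc a b := by
      intro a b ha hb h
      rw [hArc]
      refine ⟨hr01, ?_⟩
      have e1 : dζ a r = dζ a u := by
        rw [d_comm hdm a r, ← hcg a ha, d_comm hdm u a]
      have e2 : dζ r b = dζ u b := (hcg b hb).symm
      rw [e1, e2]
      exact h
    rcases le_total s s'' with hss | hss
    · have hu' : u ∈ Icc s s'' := by
        rwa [min_eq_left hss, max_eq_right hss] at hu
      rcases arc_split hζc hs hs'' hs' hu' hmu with h | h
      · exact Or.inl (htrans s s' hs hs' ((hmd s s' u).1 h))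
      · exact Or.inr (htrans s' s'' hs' hs'' ((hmd s' s'' u).1 h))
    · have hu' : u ∈ Icc s'' s := by
        rwa [min_eq_right hss, max_eq_left hss] at hu
      have hmu' : m ζ s'' u + m ζ u s = ζ u + m ζ s'' s := by
        have c1 := m_comm ζ s u
        have c2 := m_comm ζ u s''
        have c3 := m_comm ζ s s''
        linarith
      rcases arc_split hζc hs'' hs hs' hu' hmu' with h | h
      · refine Or.inr (htrans s' s'' hs' hs'' ?_)
        have h' : m ζ s' u + m ζ u s'' = ζ u + m ζ s' s'' := by
          have c1 := m_comm ζ s'' u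
          have c2 := m_comm ζ u s'
          have c3 := m_comm ζ s'' s'
          linarith
        exact (hmd s' s'' u).1 h'
      · refine Or.inl (htrans s s' hs hs' ?_)
        have h' : m ζ s u + m ζ u s' = ζ u + m ζ s s' := by
          have c1 := m_comm ζ s' u
          have c2 := m_comm ζ u s
          have c3 := m_comm ζ s' s
          linarith
        exact (hmd s s' u).1 h'
  -- cactus quantity triangle inequality
  have hΦtri : ∀ s ∈ Icc (0:ℝ) 1, ∀ s' ∈ Icc (0:ℝ) 1, ∀ s'' ∈ Icc (0:ℝ) 1,
      G s + G s'' - 2 * sInf (G '' Arc s s'') ≤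
        (G s + G s' - 2 * sInf (G '' Arc s s')) +
        (G s' + G s'' - 2 * sInf (G '' Arc s' s'')) := by
    intro s hs s' hs' s'' hs''
    have h1 : sInf (G '' Arc s s') ≤ G s' := hInfArc_le s s' s' (hmemArc s hs s' hs').2
    have h2 : sInf (G '' Arc s' s'') ≤ G s' := hInfArc_le s' s'' s' (hmemArc s' hs' s'' hs'').1
    have h3 : min (sInf (G '' Arc s s')) (sInf (G '' Arc s' s'')) ≤ sInf (G '' Arc s s'') := by
      refine le_csInf (hArcne s hs s'' hs'') ?_
      rintro - ⟨r, hr, rfl⟩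
      rcases hArcsub s hs s' hs' s'' hs'' hr with h | h
      · exact le_trans (min_le_left _ _) (hInfArc_le s s' r h)
      · exact le_trans (min_le_right _ _) (hInfArc_le s' s'' r h)
    rcases le_total (sInf (G '' Arc s s')) (sInf (G '' Arc s' s'')) with h | h
    · rw [min_eq_left h] at h3; linarith
    · rw [min_eq_right h] at h3; linarith
  have hΦself : ∀ s ∈ Icc (0:ℝ) 1, G s + G s - 2 * sInf (G '' Arc s s) ≤ 0 := by
    intro s hs
    have : G s ≤ sInf (G '' Arc s s) := by
      refine le_csInf (hArcne s hs s hs) ?_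
      rintro - ⟨r, hr, rfl⟩
      rw [hArc] at hr
      obtain ⟨hr01, hreq⟩ := hr
      rw [d_self hdm s] at hreq
      have hn1 : 0 ≤ dζ s r := d_nonneg hζc hdm hs hr01
      have hn2 : 0 ≤ dζ r s := d_nonneg hζc hdm hr01 hs
      have : dζ s r = 0 := by linarith
      exact (hGcompat s hs r hr01 this).le
    linarith
  -- cactus bound along chains
  have hchain : ∀ n : ℕ, ∀ a : ℕ → ℝ, (∀ i ≤ n, a i ∈ Icc (0:ℝ) 1) →
      G (a 0) + G (a n) - 2 * sInf (G '' Arc (a 0) (a n)) ≤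
        ∑ i ∈ Finset.range n, D₀ (a i) (a (i + 1)) := by
    intro n
    induction n with
    | zero =>
      intro a ha
      rw [Finset.sum_range_zero]
      exact hΦself (a 0) (ha 0 le_rfl)
    | succ n ih =>
      intro a ha
      have ha' : ∀ i ≤ n, a i ∈ Icc (0:ℝ) 1 := fun i hi => ha i (hi.trans (Nat.le_succ n))
      have h0 : a 0 ∈ Icc (0:ℝ) 1 := ha 0 (Nat.zero_le _)
      have hn : a n ∈ Icc (0:ℝ) 1 := ha n (Nat.le_succ n)
      have hn1 : a (n + 1) ∈ Icc (0:ℝ) 1 := ha (n + 1) le_rfl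
      rw [Finset.sum_range_succ]
      have htri := hΦtri (a 0) h0 (a n) hn (a (n + 1)) hn1
      have hD0 := hΦD₀ (a n) hn (a (n + 1)) hn1
      have hih := ih a ha'
      linarith
  -- basic facts about the chain set
  have hSne : ∀ s ∈ Icc (0:ℝ) 1, ∀ s' ∈ Icc (0:ℝ) 1, D₀ s s' ∈ Sset s s' := by
    intro s hs s' hs'
    refine ⟨1, one_pos, fun i => if i = 0 then s else s', ?_, ?_, ?_, ?_⟩
    · intro i _
      by_cases h : i = 0 <;> simp [h, hs, hs']
    · simp
    · simp
    · rw [Finset.sum_range_one]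
      simp
  have hSlb : ∀ s' ∈ Icc (0:ℝ) 1, ∀ x ∈ Sset s' s', True := fun _ _ _ _ => trivial
  have hSnonneg : ∀ s s' : ℝ, ∀ x ∈ Sset s s', (0:ℝ) ≤ x := by
    rintro s s' x ⟨n, hn, a, ha, h0, hn', rfl⟩
    refine Finset.sum_nonneg (fun i hi => ?_)
    have hi' : i < n := Finset.mem_range.1 hi
    exact hD₀nn (a i) (ha i hi'.le) (a (i + 1)) (ha (i + 1) hi')
  have hSbdd : ∀ s s' : ℝ, BddBelow (Sset s s') :=
    fun s s' => ⟨0, fun x hx => hSnonneg s s' x hx⟩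
  have hDleD₀ : ∀ s ∈ Icc (0:ℝ) 1, ∀ s' ∈ Icc (0:ℝ) 1, D s s' ≤ D₀ s s' := by
    intro s hs s' hs'
    rw [hDS]
    exact csInf_le (hSbdd s s') (hSne s hs s' hs')
  have hSnonempty : ∀ s ∈ Icc (0:ℝ) 1, ∀ s' ∈ Icc (0:ℝ) 1, (Sset s s').Nonempty :=
    fun s hs s' hs' => ⟨D₀ s s', hSne s hs s' hs'⟩
  -- now the six statements
  intro s hs s' hs' s'' hs''
  have goal1 : 0 ≤ D s s' := by
    rw [hDS]
    exact le_csInf (hSnonempty s hs s' hs') (fun x hx => hSnonneg s s' x hx)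
  have goal2 : D s s = 0 := by
    have h1 : D s s ≤ D₀ s s := hDleD₀ s hs s hs
    rw [hD₀self s hs] at h1
    have h2 : 0 ≤ D s s := by
      rw [hDS]
      exact le_csInf (hSnonempty s hs s hs) (fun x hx => hSnonneg s s x hx)
    linarith
  have hSsymm : ∀ t t' : ℝ, Sset t t' ⊆ Sset t' t := by
    rintro t t' x ⟨n, hn, a, ha, h0, hn', rfl⟩
    refine ⟨n, hn, fun i => a (n - i), fun i _ => ha (n - i) (Nat.sub_le n i), ?_, ?_, ?_⟩
    · simpa using hn'
    · simpa [Nat.sub_self] using h0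
    · show (∑ i ∈ Finset.range n, D₀ (a i) (a (i + 1))) =
        ∑ i ∈ Finset.range n, D₀ (a (n - i)) (a (n - (i + 1)))
      rw [← Finset.sum_range_reflect (fun j => D₀ (a (n - j)) (a (n - (j + 1)))) n]
      refine Finset.sum_congr rfl (fun i hi => ?_)
      have hi' : i < n := Finset.mem_range.1 hi
      have e1 : n - (n - 1 - i) = i + 1 := by omega
      have e2 : n - (n - 1 - i + 1) = i := by omega
      rw [e1, e2]
      exact hD₀comm _ _
  have goal3 : D s s' = D s' s := by
    rw [hDS, hDS]
    exact congrArg sInf (le_antisymm (hSsymm s s') (hSsymm s' s))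
  have goal4 : D s s'' ≤ D s s' + D s' s'' := by
    rw [hDS s s'', hDS s s', hDS s' s'']
    refine le_of_forall_pos_le_add (fun ε hε => ?_)
    obtain ⟨x, hx, hxlt⟩ := Real.lt_sInf_add_pos (hSnonempty s hs s' hs') (half_pos hε)
    obtain ⟨y, hy, hylt⟩ := Real.lt_sInf_add_pos (hSnonempty s' hs' s'' hs'') (half_pos hε)
    have hxy : x + y ∈ Sset s s'' := by
      obtain ⟨n, hn, a, ha, ha0, han, rfl⟩ := hx
      obtain ⟨p, hp, b, hb, hb0, hbp, rfl⟩ := hy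
      refine ⟨n + p, by omega, fun i => if i ≤ n then a i else b (i - n), ?_, ?_, ?_, ?_⟩
      · intro i hi
        by_cases h : i ≤ n
        · simpa [h] using ha i h
        · simp only [h, if_false]
          exact hb (i - n) (by omega)
      · simpa using ha0
      · show (if n + p ≤ n then a (n + p) else b (n + p - n)) = s''
        rw [if_neg (by omega), Nat.add_sub_cancel_left]
        exact hbp
      · show ((∑ i ∈ Finset.range n, D₀ (a i) (a (i + 1))) +
            ∑ i ∈ Finset.range p, D₀ (b i) (b (i + 1))) =
          ∑ i ∈ Finset.range (n + p),
            D₀ (if i ≤ n then a i else b (i - n))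
              (if i + 1 ≤ n then a (i + 1) else b (i + 1 - n))
        rw [Finset.range_eq_Ico, Finset.range_eq_Ico, Finset.range_eq_Ico,
          ← Finset.sum_Ico_consecutive _ (Nat.zero_le n) (Nat.le_add_right n p)]
        congr 1
        · rw [← Finset.range_eq_Ico]
          refine Finset.sum_congr rfl (fun i hi => ?_)
          have hi' : i < n := Finset.mem_range.1 hi
          rw [if_pos hi'.le, if_pos (by omega : i + 1 ≤ n)]
        · conv_rhs => rw [Finset.sum_Ico_eq_sum_range]
          have hrange : n + p - n = p := by omega
          rw [hrange, ← Finset.range_eq_Ico]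
          refine Finset.sum_congr rfl (fun i hi => ?_)
          symm
          by_cases h0 : i = 0
          · subst h0
            rw [if_pos (by omega : n + 0 ≤ n), if_neg (by omega : ¬ n + 0 + 1 ≤ n)]
            have e : n + 0 + 1 - n = 1 := by omega
            rw [e]
            show D₀ (a (n + 0)) (b 1) = D₀ (b 0) (b 1)
            rw [show n + 0 = n from rfl, han, hb0]
          · rw [if_neg (by omega : ¬ n + i ≤ n), if_neg (by omega : ¬ n + i + 1 ≤ n)]
            have e1 : n + i - n = i := by omega
            have e2 : n + i + 1 - n = i + 1 := by omega
            rw [e1, e2]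
    calc sInf (Sset s s'') ≤ x + y := csInf_le (hSbdd s s'') hxy
    _ ≤ (sInf (Sset s s') + ε / 2) + (sInf (Sset s' s'') + ε / 2) := by linarith
    _ = sInf (Sset s s') + sInf (Sset s' s'') + ε := by ring
  have goal5 : D s s' ≤ D₀ s s' := hDleD₀ s hs s' hs'
  have goal6 : G s + G s' - 2 * sInf (G '' Arc s s') ≤ D s s' := by
    rw [hDS]
    refine le_csInf (hSnonempty s hs s' hs') ?_
    rintro x ⟨n, hn, a, ha, h0, hn', rfl⟩
    have := hchain n a ha
    rwa [h0, hn'] at this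
  exact ⟨goal1, goal2, goal3, goal4, goal5, goal6⟩
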